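/- For any integer q ≥ 3 and any even integer d ≥ 2, χ(T_q, d) ≤ d + q + 1, where χ(T_q, d) is the chromatic number of the exact d-th power of the infinite q-regular tree. -/

import Mathlib

/-- The exact `d`-th power of a graph `G`: same vertices, adjacency iff the
distance in `G` is exactly `d`. -/
def exactDistGraph {V : Type*} (G : SimpleGraph V) (d : ℕ) : SimpleGraph V where
  Adj u v := u ≠ v ∧ G.dist u v = d
  symm := by
    constructor
    intro u v h
    exact ⟨h.1.symm, by rw [SimpleGraph.dist_comm]; exact h.2⟩
  loopless := by
    constructor
    intro u h
    exact h.1 rfl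

namespace ExactTreeAux

open SimpleGraph Walk

variable {V : Type*} {G : SimpleGraph V}

lemma dist_getVert_le (hc : G.Connected) {u v : V} (W : G.Walk u v) (i : ℕ) :
    G.dist u (W.getVert i) ≤ i ∧ G.dist (W.getVert i) v ≤ W.length - i := by
  induction W generalizing i with
  | nil =>
    refine ⟨?_, ?_⟩ <;>
      simp [show ∀ (a : V) (j : ℕ), (Walk.nil : G.Walk a a).getVert j = a from
        fun _ _ => rfl, SimpleGraph.dist_self]
  | @cons a b c hadj W ih =>
    cases i with
    | zero =>
      refine ⟨by simp [SimpleGraph.dist_self], ?_⟩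
      simpa using SimpleGraph.dist_le (Walk.cons hadj W)
    | succ i =>
      have h1 := ih i
      have hab : G.dist a b ≤ 1 := by
        simpa using SimpleGraph.dist_le (Walk.cons hadj (Walk.nil : G.Walk b b))
      have htri : G.dist a ((Walk.cons hadj W).getVert (i+1)) ≤
          G.dist a b + G.dist b (W.getVert i) := by
        rw [Walk.getVert_cons_succ]
        exact hc.dist_triangle
      constructor
      · rw [Walk.getVert_cons_succ] at htri ⊢
        omega
      · rw [Walk.getVert_cons_succ]
        simp only [Walk.length_cons]
        have := h1.2
        omega

lemma path_length_eq_dist (hc : G.Connected) (hac : G.IsAcyclic) {u v : V}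
    (p : G.Walk u v) (hp : p.IsPath) : p.length = G.dist u v := by
  obtain ⟨W, hW⟩ := hc.exists_walk_length_eq_dist u v
  have hWp : W.IsPath := W.isPath_of_length_eq_dist hW
  have heq : (⟨p, hp⟩ : G.Path u v) = ⟨W, hWp⟩ := hac.path_unique _ _
  have : p = W := congrArg Subtype.val heq
  rw [this, hW]

lemma adj_level (hc : G.Connected) (hac : G.IsAcyclic) (r : V) {x y : V}
    (h : G.Adj x y) :
    G.dist r y = G.dist r x + 1 ∨ G.dist r x = G.dist r y + 1 := by
  classical
  obtain ⟨W, hW⟩ := hc.exists_walk_length_eq_dist r x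
  have hWp : W.IsPath := W.isPath_of_length_eq_dist hW
  by_cases hy : y ∈ W.support
  · right
    have hq : (W.takeUntil y hy).length = G.dist r y :=
      path_length_eq_dist hc hac _ (hWp.takeUntil hy)
    have hlen : (W.takeUntil y hy).length + (W.dropUntil y hy).length = W.length := by
      have := congrArg Walk.length (W.take_spec hy)
      rwa [Walk.length_append] at this
    have hdrop : G.dist y x ≤ (W.dropUntil y hy).length := SimpleGraph.dist_le _
    have hyx : G.dist y x = 1 := SimpleGraph.dist_eq_one_iff_adj.mpr h.symm
    have htri : G.dist r x ≤ G.dist r y + G.dist y x := hc.dist_triangle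
    omega
  · left
    have hP : (W.concat h).IsPath := by
      rw [← Walk.isPath_reverse_iff, Walk.reverse_concat]
      refine (hWp.reverse).cons ?_
      rw [Walk.support_reverse]
      simpa using hy
    have := path_length_eq_dist hc hac _ hP
    rw [Walk.length_concat] at this
    omega

lemma unique_parent (hc : G.Connected) (hac : G.IsAcyclic) (r : V) {x y z : V}
    (hxz : G.Adj x z) (hyz : G.Adj y z)
    (hx : G.dist r x + 1 = G.dist r z) (hy : G.dist r y + 1 = G.dist r z) :
    x = y := by
  obtain ⟨Wx, hWx⟩ := hc.exists_walk_length_eq_dist r x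
  obtain ⟨Wy, hWy⟩ := hc.exists_walk_length_eq_dist r y
  have hW1 : (Wx.concat hxz).length = G.dist r z := by
    rw [Walk.length_concat, hWx, hx]
  have hW2 : (Wy.concat hyz).length = G.dist r z := by
    rw [Walk.length_concat, hWy, hy]
  have hP1 := (Wx.concat hxz).isPath_of_length_eq_dist hW1
  have hP2 := (Wy.concat hyz).isPath_of_length_eq_dist hW2
  have heq : (⟨Wx.concat hxz, hP1⟩ : G.Path r z) = ⟨Wy.concat hyz, hP2⟩ :=
    hac.path_unique _ _
  have hww : Wx.concat hxz = Wy.concat hyz := congrArg Subtype.val heq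
  have hxy : G.dist r x = G.dist r y := by omega
  have e1 : (Wx.concat hxz).getVert (G.dist r x) = x := by
    rw [Walk.concat_eq_append, Walk.getVert_append]
    simp [hWx]
  have e2 : (Wy.concat hyz).getVert (G.dist r x) = y := by
    rw [Walk.concat_eq_append, Walk.getVert_append]
    simp [hWy, hxy]
  rw [← e1, ← e2, hww]

lemma exists_anc (hc : G.Connected) (r : V) {v : V} {k : ℕ} (hk : k ≤ G.dist r v) :
    ∃ z : V, G.dist v z = k ∧ G.dist r z + k = G.dist r v := by
  obtain ⟨W, hW⟩ := hc.exists_walk_length_eq_dist r v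
  have hb := dist_getVert_le hc W (G.dist r v - k)
  rw [hW] at hb
  have htri : G.dist r v ≤ G.dist r (W.getVert (G.dist r v - k)) +
      G.dist (W.getVert (G.dist r v - k)) v := hc.dist_triangle
  refine ⟨W.getVert (G.dist r v - k), ?_, ?_⟩
  · rw [SimpleGraph.dist_comm]
    omega
  · omega

noncomputable def anc (hc : G.Connected) (r : V) (k : ℕ) (v : V) : V :=
  if h : k ≤ G.dist r v then (exists_anc hc r h).choose else v

lemma anc_dist (hc : G.Connected) (r : V) {v : V} {k : ℕ} (hk : k ≤ G.dist r v) :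
    G.dist v (anc hc r k v) = k := by
  rw [anc, dif_pos hk]
  exact (exists_anc hc r hk).choose_spec.1

lemma anc_level (hc : G.Connected) (r : V) {v : V} {k : ℕ} (hk : k ≤ G.dist r v) :
    G.dist r (anc hc r k v) + k = G.dist r v := by
  rw [anc, dif_pos hk]
  exact (exists_anc hc r hk).choose_spec.2

lemma anc_level_le (hc : G.Connected) (r : V) (v : V) (k : ℕ) :
    G.dist r (anc hc r k v) ≤ G.dist r v := by
  by_cases hk : k ≤ G.dist r v
  · have := anc_level hc r hk
    omega
  · rw [anc, dif_neg hk]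

lemma anc_unique (hc : G.Connected) (hac : G.IsAcyclic) (r : V) {v z : V} {k : ℕ}
    (h1 : G.dist v z = k) (h2 : G.dist r z + k = G.dist r v) :
    z = anc hc r k v := by
  have hk : k ≤ G.dist r v := by omega
  have ha1 : G.dist v (anc hc r k v) = k := anc_dist hc r hk
  have ha2 : G.dist r (anc hc r k v) + k = G.dist r v := anc_level hc r hk
  obtain ⟨p1, hp1⟩ := hc.exists_walk_length_eq_dist v z
  obtain ⟨p2, hp2⟩ := hc.exists_walk_length_eq_dist z r
  obtain ⟨p3, hp3⟩ := hc.exists_walk_length_eq_dist v (anc hc r k v)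
  obtain ⟨p4, hp4⟩ := hc.exists_walk_length_eq_dist (anc hc r k v) r
  have hzr : G.dist z r = G.dist r z := SimpleGraph.dist_comm
  have har : G.dist (anc hc r k v) r = G.dist r (anc hc r k v) := SimpleGraph.dist_comm
  have hvr : G.dist v r = G.dist r v := SimpleGraph.dist_comm
  have hW1 : (p1.append p2).length = G.dist v r := by
    rw [Walk.length_append, hp1, hp2]; omega
  have hW2 : (p3.append p4).length = G.dist v r := by
    rw [Walk.length_append, hp3, hp4]; omega
  have hP1 := (p1.append p2).isPath_of_length_eq_dist hW1
  have hP2 := (p3.append p4).isPath_of_length_eq_dist hW2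
  have heq : (⟨p1.append p2, hP1⟩ : G.Path v r) = ⟨p3.append p4, hP2⟩ :=
    hac.path_unique _ _
  have hww : p1.append p2 = p3.append p4 := congrArg Subtype.val heq
  have e1 : (p1.append p2).getVert k = z := by
    rw [Walk.getVert_append]
    simp [hp1, h1]
  have e2 : (p3.append p4).getVert k = anc hc r k v := by
    rw [Walk.getVert_append]
    simp [hp3, ha1]
  rw [← e1, hww, e2]

lemma anc_anc (hc : G.Connected) (hac : G.IsAcyclic) (r : V) {v : V} {j k : ℕ}
    (hjk : j + k ≤ G.dist r v) :
    anc hc r j (anc hc r k v) = anc hc r (j + k) v := by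
  have hk : k ≤ G.dist r v := by omega
  have h1 : G.dist v (anc hc r k v) = k := anc_dist hc r hk
  have h2 : G.dist r (anc hc r k v) + k = G.dist r v := anc_level hc r hk
  have hj : j ≤ G.dist r (anc hc r k v) := by omega
  have h3 : G.dist (anc hc r k v) (anc hc r j (anc hc r k v)) = j := anc_dist hc r hj
  have h4 : G.dist r (anc hc r j (anc hc r k v)) + j = G.dist r (anc hc r k v) :=
    anc_level hc r hj
  have t1 : G.dist v (anc hc r j (anc hc r k v)) ≤
      G.dist v (anc hc r k v) + G.dist (anc hc r k v) (anc hc r j (anc hc r k v)) :=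
    hc.dist_triangle
  have t2 : G.dist r v ≤ G.dist r (anc hc r j (anc hc r k v)) +
      G.dist (anc hc r j (anc hc r k v)) v := hc.dist_triangle
  have t3 : G.dist (anc hc r j (anc hc r k v)) v = G.dist v (anc hc r j (anc hc r k v)) :=
    SimpleGraph.dist_comm
  have hres := anc_unique hc hac r (v := v) (z := anc hc r j (anc hc r k v))
    (k := j + k) (by omega) (by omega)
  exact hres

lemma exists_meet (hc : G.Connected) (hac : G.IsAcyclic) (r : V) :
    ∀ (D : ℕ) (u v : V), G.dist u v = D →
      ∃ (w : V) (a b : ℕ), a + b = D ∧ G.dist u w = a ∧ G.dist w v = b ∧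
        G.dist r u = G.dist r w + a ∧ G.dist r v = G.dist r w + b := by
  intro D
  induction D with
  | zero =>
    intro u v hd
    have huv : u = v := hc.dist_eq_zero_iff.mp hd
    subst huv
    exact ⟨u, 0, 0, by simp [SimpleGraph.dist_self]⟩
  | succ D ih =>
    intro u v hD
    obtain ⟨W, hW⟩ := hc.exists_walk_length_eq_dist u v
    rw [hD] at hW
    cases W with
    | nil => simp at hW
    | @cons _ x1 _ hadj W' =>
      have hux1 : G.dist u x1 ≤ 1 := by
        simpa using SimpleGraph.dist_le (Walk.cons hadj (Walk.nil : G.Walk x1 x1))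
      have hx1v : G.dist x1 v = D := by
        have hle : G.dist x1 v ≤ D := by
          have := SimpleGraph.dist_le W'
          simp only [Walk.length_cons] at hW
          omega
        have htri : G.dist u v ≤ G.dist u x1 + G.dist x1 v := hc.dist_triangle
        omega
      obtain ⟨w, a, b, hab, h1, h2, h3, h4⟩ := ih x1 v hx1v
      rcases adj_level hc hac r hadj with hcase | hcase
      · -- dist r x1 = dist r u + 1
        by_cases ha : a = 0
        · subst ha
          have hwx1 : x1 = w := hc.dist_eq_zero_iff.mp h1
          refine ⟨u, 0, D + 1, by omega, SimpleGraph.dist_self, hD, by omega, ?_⟩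
          subst hwx1
          omega
        · exfalso
          have hx1pos : 1 ≤ G.dist r x1 := by omega
          have hpd : G.dist x1 (anc hc r 1 x1) = 1 := anc_dist hc r hx1pos
          have hpl : G.dist r (anc hc r 1 x1) + 1 = G.dist r x1 := anc_level hc r hx1pos
          have hadj' : G.Adj x1 (anc hc r 1 x1) := SimpleGraph.dist_eq_one_iff_adj.mp hpd
          have hu : u = anc hc r 1 x1 :=
            unique_parent hc hac r hadj hadj'.symm (by omega) (by omega)
          have hwa : w = anc hc r a x1 := anc_unique hc hac r h1 (by omega)
          have haa : anc hc r (a - 1) (anc hc r 1 x1) = anc hc r a x1 := by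
            have := anc_anc hc hac r (j := a - 1) (k := 1) (v := x1) (by omega)
            rwa [show a - 1 + 1 = a by omega] at this
          have hdu : G.dist (anc hc r 1 x1) (anc hc r (a-1) (anc hc r 1 x1)) = a - 1 :=
            anc_dist hc r (by omega)
          have hduw : G.dist u w = a - 1 := by
            rw [hu, hwa, ← haa]
            exact hdu
          have htri : G.dist u v ≤ G.dist u w + G.dist w v := hc.dist_triangle
          omega
      · -- dist r u = dist r x1 + 1
        have hduw : G.dist u w = a + 1 := by
          have htr1 : G.dist u w ≤ G.dist u x1 + G.dist x1 w := hc.dist_triangle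
          have htr2 : G.dist r u ≤ G.dist r w + G.dist w u := hc.dist_triangle
          have hcm : G.dist w u = G.dist u w := SimpleGraph.dist_comm
          omega
        exact ⟨w, a + 1, b, by omega, hduw, h2, by omega, h4⟩

variable (r : V) (d q : ℕ)

lemma exists_good (hreg : ∀ v : V, (G.neighborSet v).ncard = q) (hq : q ≠ 0) (z : V)
    (forb : Finset (Fin (d + q + 1))) :
    ∃ f : V → Fin (d + q + 1), forb.card ≤ d →
      (Set.InjOn f {x | G.Adj z x ∧ G.dist r x = G.dist r z + 1} ∧
        ∀ x, G.Adj z x → G.dist r x = G.dist r z + 1 → f x ∉ forb) := by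
  classical
  by_cases hcard : forb.card ≤ d
  · have hnfin : (G.neighborSet z).Finite :=
      Set.finite_of_ncard_ne_zero (by rw [hreg]; exact hq)
    have hsub : {x | G.Adj z x ∧ G.dist r x = G.dist r z + 1} ⊆ G.neighborSet z :=
      fun x hx => hx.1
    have hfin : ({x | G.Adj z x ∧ G.dist r x = G.dist r z + 1} : Set V).Finite :=
      hnfin.subset hsub
    have hct : hfin.toFinset.card ≤ q := by
      have h1 := Set.ncard_le_ncard hsub hnfin
      rw [hreg] at h1
      rwa [Set.ncard_eq_toFinset_card _ hfin] at h1
    have hcard2 : Fintype.card hfin.toFinset ≤ Fintype.card (↥(forbᶜ)) := by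
      rw [Fintype.card_coe, Fintype.card_coe, Finset.card_compl, Fintype.card_fin]
      omega
    obtain ⟨e⟩ := Function.Embedding.nonempty_of_card_le hcard2
    refine ⟨fun x => if h : x ∈ hfin.toFinset then (e ⟨x, h⟩ : Fin (d + q + 1))
      else ⟨0, by omega⟩, fun _ => ⟨?_, ?_⟩⟩
    · intro x hx y hy hxy
      have hx' : x ∈ hfin.toFinset := hfin.mem_toFinset.mpr hx
      have hy' : y ∈ hfin.toFinset := hfin.mem_toFinset.mpr hy
      dsimp only at hxy
      rw [dif_pos hx', dif_pos hy'] at hxy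
      have := e.injective (Subtype.ext hxy)
      exact congrArg Subtype.val this
    · intro x hadj hdist
      have hx' : x ∈ hfin.toFinset := hfin.mem_toFinset.mpr ⟨hadj, hdist⟩
      dsimp only
      rw [dif_pos hx']
      have h2 := (e ⟨x, hx'⟩).2
      rw [Finset.mem_compl] at h2
      exact h2
  · exact ⟨fun _ => ⟨0, by omega⟩, fun h => absurd h hcard⟩

noncomputable def chooseF (hreg : ∀ v : V, (G.neighborSet v).ncard = q) (hq : q ≠ 0)
    (z : V) (forb : Finset (Fin (d + q + 1))) : V → Fin (d + q + 1) :=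
  (exists_good r d q hreg hq z forb).choose

lemma chooseF_spec (hreg : ∀ v : V, (G.neighborSet v).ncard = q) (hq : q ≠ 0)
    (z : V) (forb : Finset (Fin (d + q + 1))) (hcard : forb.card ≤ d) :
    Set.InjOn (chooseF r d q hreg hq z forb)
        {x | G.Adj z x ∧ G.dist r x = G.dist r z + 1} ∧
      ∀ x, G.Adj z x → G.dist r x = G.dist r z + 1 →
        chooseF r d q hreg hq z forb x ∉ forb :=
  (exists_good r d q hreg hq z forb).choose_spec hcard

noncomputable def phi (hc : G.Connected)
    (hreg : ∀ v : V, (G.neighborSet v).ncard = q) (hq : q ≠ 0) (x : V) :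
    Fin (d + q + 1) :=
  if h0 : G.dist r x = 0 then ⟨0, by omega⟩
  else
    chooseF r d q hreg hq (anc hc r 1 x)
      ((Finset.range d).image fun j => phi hc hreg hq (anc hc r j (anc hc r 1 x)))
      x
termination_by G.dist r x
decreasing_by
  have h1 : G.dist r (anc hc r 1 x) + 1 = G.dist r x := anc_level hc r (by omega)
  have h2 : G.dist r (anc hc r j (anc hc r 1 x)) ≤ G.dist r (anc hc r 1 x) :=
    anc_level_le hc r _ _
  omega

lemma phi_spec (hc : G.Connected)
    (hreg : ∀ v : V, (G.neighborSet v).ncard = q) (hq : q ≠ 0) (x : V)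
    (h0 : G.dist r x ≠ 0) :
    phi r d q hc hreg hq x =
      chooseF r d q hreg hq (anc hc r 1 x)
        ((Finset.range d).image fun j => phi r d q hc hreg hq (anc hc r j (anc hc r 1 x)))
        x := by
  rw [phi]
  exact dif_neg h0

lemma phi_ne_anc (hc : G.Connected) (hac : G.IsAcyclic)
    (hreg : ∀ v : V, (G.neighborSet v).ncard = q) (hq : q ≠ 0) {x : V} {k : ℕ}
    (hk1 : 1 ≤ k) (hkd : k ≤ d) (hkl : k ≤ G.dist r x) :
    phi r d q hc hreg hq x ≠ phi r d q hc hreg hq (anc hc r k x) := by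
  have h0 : G.dist r x ≠ 0 := by omega
  have hcard : ((Finset.range d).image fun j =>
      phi r d q hc hreg hq (anc hc r j (anc hc r 1 x))).card ≤ d :=
    Finset.card_image_le.trans (by simp)
  have hspec := chooseF_spec r d q hreg hq (anc hc r 1 x)
    ((Finset.range d).image fun j => phi r d q hc hreg hq (anc hc r j (anc hc r 1 x)))
    hcard
  have hd1 : G.dist x (anc hc r 1 x) = 1 := anc_dist hc r (by omega)
  have hl1 : G.dist r (anc hc r 1 x) + 1 = G.dist r x := anc_level hc r (by omega)
  have hadj : G.Adj (anc hc r 1 x) x :=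
    (SimpleGraph.dist_eq_one_iff_adj.mp hd1).symm
  have havoid := hspec.2 x hadj (by omega)
  have hmem : phi r d q hc hreg hq (anc hc r k x) ∈
      (Finset.range d).image fun j =>
        phi r d q hc hreg hq (anc hc r j (anc hc r 1 x)) := by
    have haa : anc hc r (k - 1) (anc hc r 1 x) = anc hc r k x := by
      have := anc_anc hc hac r (j := k - 1) (k := 1) (v := x) (by omega)
      rwa [show k - 1 + 1 = k by omega] at this
    refine Finset.mem_image.mpr ⟨k - 1, Finset.mem_range.mpr (by omega), ?_⟩
    rw [haa]
  intro heq
  rw [phi_spec r d q hc hreg hq x h0] at heq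
  rw [← heq] at hmem
  exact havoid hmem

lemma phi_sib (hc : G.Connected)
    (hreg : ∀ v : V, (G.neighborSet v).ncard = q) (hq : q ≠ 0) {x y : V}
    (hxy : x ≠ y) (h0 : G.dist r x ≠ 0) (hl : G.dist r x = G.dist r y)
    (hanc : anc hc r 1 x = anc hc r 1 y) :
    phi r d q hc hreg hq x ≠ phi r d q hc hreg hq y := by
  have h0y : G.dist r y ≠ 0 := by omega
  have hd1x : G.dist x (anc hc r 1 x) = 1 := anc_dist hc r (by omega)
  have hl1x : G.dist r (anc hc r 1 x) + 1 = G.dist r x := anc_level hc r (by omega)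
  have hd1y : G.dist y (anc hc r 1 y) = 1 := anc_dist hc r (by omega)
  have hl1y : G.dist r (anc hc r 1 y) + 1 = G.dist r y := anc_level hc r (by omega)
  have hadjx : G.Adj (anc hc r 1 x) x := (SimpleGraph.dist_eq_one_iff_adj.mp hd1x).symm
  have hadjy : G.Adj (anc hc r 1 x) y := by
    rw [hanc]
    exact (SimpleGraph.dist_eq_one_iff_adj.mp hd1y).symm
  have hcard : ((Finset.range d).image fun j =>
      phi r d q hc hreg hq (anc hc r j (anc hc r 1 x))).card ≤ d :=
    Finset.card_image_le.trans (by simp)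
  have hspec := chooseF_spec r d q hreg hq (anc hc r 1 x)
    ((Finset.range d).image fun j => phi r d q hc hreg hq (anc hc r j (anc hc r 1 x)))
    hcard
  have hxC : x ∈ {x' | G.Adj (anc hc r 1 x) x' ∧
      G.dist r x' = G.dist r (anc hc r 1 x) + 1} := ⟨hadjx, by omega⟩
  have hyC : y ∈ {x' | G.Adj (anc hc r 1 x) x' ∧
      G.dist r x' = G.dist r (anc hc r 1 x) + 1} := ⟨hadjy, by omega⟩
  intro heq
  rw [phi_spec r d q hc hreg hq x h0, phi_spec r d q hc hreg hq y h0y, ← hanc] at heq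
  exact hxy (hspec.1 hxC hyC heq)

lemma key_ne (hc : G.Connected) (hac : G.IsAcyclic)
    (hreg : ∀ v : V, (G.neighborSet v).ncard = q) (hq : q ≠ 0)
    (h : ℕ) (hhd : d = h + h) (hh1 : 1 ≤ h) {u v : V}
    (hdist : G.dist u v = d) (hlev : G.dist r v ≤ G.dist r u) :
    phi r d q hc hreg hq (anc hc r (min (h - 1) (G.dist r u)) u) ≠
      phi r d q hc hreg hq (anc hc r (min (h - 1) (G.dist r v)) v) := by
  obtain ⟨w, a, b, hab, hduw, hdwv, hlu, hlv⟩ := exists_meet hc hac r d u v hdist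
  have hba : b ≤ a := by omega
  have hminu : min (h - 1) (G.dist r u) = h - 1 := min_eq_left (by omega)
  rw [hminu]
  by_cases hba' : b = a
  · -- equal levels, a = b = h
    have ha : a = h := by omega
    have hminv : min (h - 1) (G.dist r v) = h - 1 := min_eq_left (by omega)
    rw [hminv]
    have hub : G.dist u (anc hc r (h-1) u) = h - 1 := anc_dist hc r (by omega)
    have hvb : G.dist v (anc hc r (h-1) v) = h - 1 := anc_dist hc r (by omega)
    have hlub : G.dist r (anc hc r (h-1) u) + (h-1) = G.dist r u := anc_level hc r (by omega)
    have hlvb : G.dist r (anc hc r (h-1) v) + (h-1) = G.dist r v := anc_level hc r (by omega)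
    have hwu : anc hc r a u = w := (anc_unique hc hac r hduw (by omega)).symm
    have hwv : anc hc r a v = w := by
      refine (anc_unique hc hac r ?_ (by omega)).symm
      rw [SimpleGraph.dist_comm]
      omega
    have h1u : anc hc r 1 (anc hc r (h-1) u) = w := by
      have := anc_anc hc hac r (j := 1) (k := h - 1) (v := u) (by omega)
      rw [this, show 1 + (h - 1) = a by omega, hwu]
    have h1v : anc hc r 1 (anc hc r (h-1) v) = w := by
      have := anc_anc hc hac r (j := 1) (k := h - 1) (v := v) (by omega)
      rw [this, show 1 + (h - 1) = a by omega, hwv]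
    refine phi_sib r d q hc hreg hq ?_ (by omega) (by omega) (h1u.trans h1v.symm)
    -- the two anchors are distinct
    intro heq
    have htri : G.dist u v ≤ G.dist u (anc hc r (h-1) u) +
        G.dist (anc hc r (h-1) u) v := hc.dist_triangle
    have hcm : G.dist (anc hc r (h-1) v) v = G.dist v (anc hc r (h-1) v) :=
      SimpleGraph.dist_comm
    rw [heq] at htri hub
    omega
  · -- unequal levels
    have hba2 : b < a := lt_of_le_of_ne hba hba' 
    have hah : h + 1 ≤ a := by omega
    have hbh : b + 1 ≤ h := by omega
    have hk1 : min (h - 1) (G.dist r v) ≤ h - 1 := min_le_left _ _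
    have hk2 : min (h - 1) (G.dist r v) ≤ G.dist r v := min_le_right _ _
    have hkb : b ≤ min (h - 1) (G.dist r v) := le_min (by omega) (by omega)
    set k := min (h - 1) (G.dist r v) with hkdef
    have hβu_l : G.dist r (anc hc r (h-1) u) + (h-1) = G.dist r u := anc_level hc r (by omega)
    have hβu_d : G.dist u (anc hc r (h-1) u) = h-1 := anc_dist hc r (by omega)
    have hβv_l : G.dist r (anc hc r k v) + k = G.dist r v := anc_level hc r hk2
    have hwu : anc hc r a u = w := (anc_unique hc hac r hduw (by omega)).symm
    have hwv : anc hc r b v = w := by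
      refine (anc_unique hc hac r ?_ (by omega)).symm
      rw [SimpleGraph.dist_comm]
      omega
    have hw2 : anc hc r (a - (h-1)) (anc hc r (h-1) u) = w := by
      have := anc_anc hc hac r (j := a - (h-1)) (k := h-1) (v := u) (by omega)
      rw [this, show a - (h-1) + (h-1) = a by omega, hwu]
    have hdβuw : G.dist (anc hc r (h-1) u) w = a - (h-1) := by
      rw [← hw2]
      exact anc_dist hc r (by omega)
    have hβv2 : anc hc r (k - b) w = anc hc r k v := by
      have h1 := anc_anc hc hac r (j := k - b) (k := b) (v := v) (by omega)
      rw [hwv] at h1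
      rwa [show k - b + b = k by omega] at h1
    have hdwβv : G.dist w (anc hc r k v) = k - b := by
      rw [← hβv2]
      exact anc_dist hc r (by omega)
    have htri : G.dist (anc hc r (h-1) u) (anc hc r k v) ≤
        G.dist (anc hc r (h-1) u) w + G.dist w (anc hc r k v) := hc.dist_triangle
    have hlow : G.dist r (anc hc r (h-1) u) ≤
        G.dist r (anc hc r k v) + G.dist (anc hc r k v) (anc hc r (h-1) u) :=
      hc.dist_triangle
    have hcm : G.dist (anc hc r k v) (anc hc r (h-1) u) =
        G.dist (anc hc r (h-1) u) (anc hc r k v) := SimpleGraph.dist_comm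
    have hδ : G.dist (anc hc r (h-1) u) (anc hc r k v) = (a - (h-1)) + (k - b) := by
      omega
    have hanc : anc hc r ((a - (h-1)) + (k - b)) (anc hc r (h-1) u) = anc hc r k v :=
      (anc_unique hc hac r hδ (by omega)).symm
    have hmain := phi_ne_anc r d q hc hac hreg hq (x := anc hc r (h-1) u)
      (k := (a - (h-1)) + (k - b)) (by omega) (by omega) (by omega)
    rw [hanc] at hmain
    exact hmain

end ExactTreeAux

/-- For `q ≥ 3` and even `d ≥ 2`, the exact `d`-th power of the infinite
`q`-regular tree is `(d + q + 1)`-colorable, i.e. `χ(T_q, d) ≤ d + q + 1`. -/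
theorem exactPower_regular_tree_colorable_add {V : Type*}
    (G : SimpleGraph V) (q d : ℕ) (hq : 3 ≤ q)
    (htree : G.IsTree) (hreg : ∀ v : V, (G.neighborSet v).ncard = q)
    (hd : Even d) (hd2 : 2 ≤ d) :
    (exactDistGraph G d).Colorable (d + q + 1) := by
  classical
  have hc : G.Connected := htree.isConnected
  have hac : G.IsAcyclic := htree.IsAcyclic
  obtain ⟨r⟩ := hc.nonempty
  obtain ⟨h, hh⟩ := hd
  have hh1 : 1 ≤ h := by omega
  have hq0 : q ≠ 0 := by omega
  refine ⟨SimpleGraph.Coloring.mk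
    (fun v => ExactTreeAux.phi r d q hc hreg hq0
      (ExactTreeAux.anc hc r (min (h - 1) (G.dist r v)) v)) ?_⟩
  intro u v hadj
  obtain ⟨hne, hdd⟩ := hadj
  rcases le_total (G.dist r v) (G.dist r u) with hle | hle
  · exact ExactTreeAux.key_ne r d q hc hac hreg hq0 h hh hh1 hdd hle
  · exact (ExactTreeAux.key_ne r d q hc hac hreg hq0 h hh hh1
      (by rwa [SimpleGraph.dist_comm]) hle).symm
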